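/- Let π denote the real number pi and let y ∈ (0,1) be a real number. The family (y^(n₀(s) + π·n₁(s)))_s, indexed by all finite binary strings s containing no two consecutive 1s (where n₀(s) and n₁(s) denote the number of 0s and 1s in s respectively), is summable if and only if y + y^(1+π) < 1. -/

import Mathlib

open Real

/-- Finite binary strings containing no two consecutive 1s. -/
def NoDoubleOne (s : List Bool) : Prop := ¬ [true, true] <:+: s

namespace NDOaux

lemma count_add_count (t : List Bool) : t.count false + t.count true = t.length := by
  induction t with
  | nil => simp
  | cons x l ih => cases x <;> simp [List.count_cons] <;> omega

def good : List Bool → Bool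
  | [] => true
  | false :: t => good t
  | [true] => true
  | true :: false :: t => good t
  | true :: true :: _ => false

def parse : List Bool → List Bool × Bool
  | [] => ([], false)
  | false :: t => ((false :: (parse t).1), (parse t).2)
  | [true] => ([], true)
  | true :: false :: t => ((true :: (parse t).1), (parse t).2)
  | true :: true :: _ => ([], false)

def unparse (p : List Bool × Bool) : List Bool :=
  (p.1.flatMap fun x => if x then [true, false] else [false]) ++ (if p.2 then [true] else [])

lemma unparse_cons (x : Bool) (t : List Bool) (b : Bool) :
    unparse (x :: t, b) = (if x then [true, false] else [false]) ++ unparse (t, b) := by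
  simp only [unparse, List.flatMap_cons, List.append_assoc]

lemma infix_iff_good (s : List Bool) : [true, true] <:+: s ↔ good s = false := by
  induction s using good.induct with
  | case1 => simp [good]
  | case2 t ih => simp [good, List.infix_cons_iff, ih, List.cons_prefix_cons]
  | case3 => simp [good, List.infix_cons_iff, List.cons_prefix_cons, List.IsPrefix]
  | case4 t ih => simp [good, List.infix_cons_iff, ih, List.cons_prefix_cons]
  | case5 t => simp [good, List.infix_cons_iff, List.cons_prefix_cons]

lemma good_of_ndo {s : List Bool} (h : NoDoubleOne s) : good s = true := by
  rcases Bool.eq_false_or_eq_true (good s) with hg | hg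
  · exact hg
  · exact absurd ((infix_iff_good s).2 hg) h

lemma ndo_of_good {s : List Bool} (h : good s = true) : NoDoubleOne s := by
  intro hinf
  rw [infix_iff_good] at hinf
  simp [h] at hinf

lemma unparse_parse (s : List Bool) (h : good s = true) : unparse (parse s) = s := by
  induction s using good.induct with
  | case1 => simp [parse, unparse]
  | case2 t ih => simp only [good] at h; simp [parse, unparse_cons, Prod.mk.eta, ih h]
  | case3 => simp [parse, unparse]
  | case4 t ih => simp only [good] at h; simp [parse, unparse_cons, Prod.mk.eta, ih h]
  | case5 t => simp [good] at h

lemma parse_unparse (l : List Bool) (b : Bool) : parse (unparse (l, b)) = (l, b) := by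
  induction l with
  | nil => cases b <;> simp [parse, unparse]
  | cons x t ih => cases x <;> rw [unparse_cons] <;> simp [parse, ih]

lemma good_unparse (l : List Bool) (b : Bool) : good (unparse (l, b)) = true := by
  induction l with
  | nil => cases b <;> simp [good, unparse]
  | cons x t ih => cases x <;> rw [unparse_cons] <;> simp [good, ih]

lemma count_false_unparse (l : List Bool) (b : Bool) :
    (unparse (l, b)).count false = l.count false + l.count true := by
  induction l with
  | nil => cases b <;> simp [unparse]
  | cons x t ih =>
      have := count_add_count t
      cases x <;> rw [unparse_cons] <;>
        simp only [List.count_append, ih, List.count_cons, if_true, if_false] <;>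
        simp <;> omega

lemma count_true_unparse (l : List Bool) (b : Bool) :
    (unparse (l, b)).count true = l.count true + (if b then 1 else 0) := by
  induction l with
  | nil => cases b <;> simp [unparse]
  | cons x t ih =>
      have := count_add_count t
      cases x <;> rw [unparse_cons] <;>
        simp only [List.count_append, ih, List.count_cons, if_true, if_false] <;>
        simp <;> omega

lemma prod_eq (c d : ℝ) (l : List Bool) :
    (l.map fun b => if b then d else c).prod = c ^ l.count false * d ^ l.count true := by
  induction l with
  | nil => simp
  | cons x t ih => cases x <;> simp [List.count_cons, ih, pow_succ] <;> ring

lemma summable_list_iff (c d : ℝ) (hc : 0 < c) (hd : 0 < d) :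
    Summable (fun l : List Bool => c ^ l.count false * d ^ l.count true) ↔ c + d < 1 := by
  have hw : ∀ l : List Bool, c ^ l.count false * d ^ l.count true
      = (l.map fun b => if b then d else c).prod := fun l => (prod_eq c d l).symm
  have key : Summable (fun l : List Bool => c ^ l.count false * d ^ l.count true)
      ↔ Summable (fun n : ℕ => (c + d) ^ n) := by
    rw [← Equiv.summable_iff (List.equivSigmaTuple (α := Bool)).symm]
    have hg : ∀ p : (n : ℕ) × (Fin n → Bool),
        ((fun l : List Bool => c ^ l.count false * d ^ l.count true) ∘
          (List.equivSigmaTuple (α := Bool)).symm) p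
        = ∏ i : Fin p.1, (if p.2 i then d else c) := by
      rintro ⟨n, x⟩
      simp only [Function.comp_apply, hw, List.equivSigmaTuple]
      simp [List.map_ofFn, List.prod_ofFn]
    rw [summable_congr hg]
    have hnn : ∀ p : (n : ℕ) × (Fin n → Bool),
        0 ≤ ∏ i : Fin p.1, (if p.2 i then d else c) := by
      rintro ⟨n, x⟩
      exact Finset.prod_nonneg fun i _ => by split <;> positivity
    rw [summable_sigma_of_nonneg hnn]
    have hfib : ∀ n : ℕ, (∑' x : Fin n → Bool, ∏ i : Fin n, (if x i then d else c))
        = (c + d) ^ n := by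
      intro n
      rw [tsum_fintype]
      have h1 : (∏ i : Fin n, ∑ v : Bool, (if v then d else c))
          = ∑ b ∈ Fintype.piFinset (fun _ : Fin n => (Finset.univ : Finset Bool)),
              ∏ i : Fin n, (if b i then d else c) :=
        Finset.prod_univ_sum _ _
      rw [Fintype.piFinset_univ] at h1
      rw [← h1]
      simp [add_comm d c]
    constructor
    · rintro ⟨-, h2⟩
      exact (summable_congr hfib).1 h2
    · intro h
      exact ⟨fun n => Summable.of_finite, (summable_congr hfib).2 h⟩
  rw [key, summable_geometric_iff_norm_lt_one, Real.norm_eq_abs,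
    abs_of_nonneg (by positivity)]

end NDOaux

open NDOaux in
set_option maxHeartbeats 1000000 in
theorem genfun_no_double_one_summable_iff (y : ℝ) (hy : y ∈ Set.Ioo (0 : ℝ) 1) :
    Summable
      (fun s : {s : List Bool // NoDoubleOne s} =>
        y ^ ((s.1.count false : ℝ) + π * (s.1.count true : ℝ)))
    ↔ y + y ^ (1 + π) < 1 := by
  obtain ⟨hy0, hy1⟩ := hy
  set e : ℝ := y ^ (π : ℝ) with he_def
  set d : ℝ := y ^ ((1 : ℝ) + π) with hd_def
  have he : 0 < e := rpow_pos_of_pos hy0 _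
  have hd : 0 < d := rpow_pos_of_pos hy0 _
  have hde : d = y * e := by
    rw [hd_def, he_def, rpow_add hy0, rpow_one]
  -- weight formula with natural powers
  have hF : ∀ s : List Bool,
      y ^ ((s.count false : ℝ) + π * (s.count true : ℝ))
        = y ^ s.count false * e ^ s.count true := by
    intro s
    rw [rpow_add hy0, rpow_natCast, rpow_mul hy0.le, rpow_natCast]
  constructor
  · intro h
    have hj : ∀ l : List Bool, NoDoubleOne (unparse (l, false)) :=
      fun l => ndo_of_good (good_unparse l false)
    set j : List Bool → {s : List Bool // NoDoubleOne s} :=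
      fun l => ⟨unparse (l, false), hj l⟩ with hj_def
    have hjinj : Function.Injective j := by
      intro l1 l2 hl
      have : parse (unparse (l1, false)) = parse (unparse (l2, false)) := by
        rw [Subtype.ext_iff] at hl
        simpa [hj_def] using congrArg parse hl
      rw [parse_unparse, parse_unparse] at this
      exact (Prod.ext_iff.1 this).1
    have hcomp := h.comp_injective hjinj
    have heq : ∀ l : List Bool,
        ((fun s : {s : List Bool // NoDoubleOne s} =>
          y ^ ((s.1.count false : ℝ) + π * (s.1.count true : ℝ))) ∘ j) l
        = y ^ l.count false * d ^ l.count true := by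
      intro l
      simp only [Function.comp_apply, hj_def, hF, count_false_unparse, count_true_unparse]
      simp only [if_neg Bool.false_ne_true, add_zero, hde, mul_pow, pow_add]
      ring
    rw [summable_congr heq] at hcomp
    exact (summable_list_iff y d hy0 hd).1 hcomp
  · intro h
    have hG : Summable (fun p : List Bool × Bool =>
        (y ^ p.1.count false * d ^ p.1.count true) * (if p.2 then e else 1)) := by
      refine Summable.mul_of_nonneg ((summable_list_iff y d hy0 hd).2 h)
        (Summable.of_finite (f := fun b : Bool => if b then e else 1)) ?_ ?_
      · intro l; positivity
      · intro b; dsimp only; split <;> positivity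
    set i : {s : List Bool // NoDoubleOne s} → List Bool × Bool :=
      fun s => parse s.1 with hi_def
    have hiinj : Function.Injective i := by
      intro s1 s2 hs
      have h1 := unparse_parse s1.1 (good_of_ndo s1.2)
      have h2 := unparse_parse s2.1 (good_of_ndo s2.2)
      apply Subtype.ext
      rw [← h1, ← h2]
      exact congrArg unparse hs
    have hcomp := hG.comp_injective hiinj
    have heq : ∀ s : {s : List Bool // NoDoubleOne s},
        ((fun p : List Bool × Bool =>
          (y ^ p.1.count false * d ^ p.1.count true) * (if p.2 then e else 1)) ∘ i) s
        = y ^ ((s.1.count false : ℝ) + π * (s.1.count true : ℝ)) := by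
      intro s
      have hup := unparse_parse s.1 (good_of_ndo s.2)
      rcases hp : parse s.1 with ⟨l, b⟩
      rw [hp] at hup
      have hcf : s.1.count false = l.count false + l.count true := by
        conv_lhs => rw [← hup]
        exact count_false_unparse _ _
      have hct : s.1.count true = l.count true + (if b then 1 else 0) := by
        conv_lhs => rw [← hup]
        exact count_true_unparse _ _
      have hstep : ((fun p : List Bool × Bool =>
          (y ^ p.1.count false * d ^ p.1.count true) * (if p.2 then e else 1)) ∘ i) s
          = (y ^ l.count false * d ^ l.count true) * (if b then e else 1) := by
        simp [hi_def, hp]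
      rw [hstep, hF s.1, hcf, hct]
      cases b <;>
        simp only [if_true, if_false, Bool.false_eq_true, add_zero, hde, mul_pow,
          pow_add, pow_one, mul_one] <;> ring
    rw [summable_congr heq] at hcomp
    exact hcomp
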